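/- Suppose ε ∈ (0,1/2), D ≥ 8/ε², and A is a real matrix with rows indexed by a finite set V of size n and columns indexed by a finite set W of size m, with ‖A‖ = mn. Let V₁,…,V_k be pairwise disjoint subsets of V with |V_i| ≥ n/(2k) for each i, and let W₁,…,W_l be pairwise disjoint subsets of W with |W_j| ≥ m/(2l) for each j. Then the number of pairs (i,j) with |d_A(V_i,W_j)| ≥ εD is at most εkl/2. -/

import Mathlib

open Finset

/-- `w_A(X,Y)`: the sum of the entries of `A` over the block `X × Y`. -/
def wSum {V W : Type*} (A : V → W → ℝ) (X : Finset V) (Y : Finset W) : ℝ :=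
  ∑ x ∈ X, ∑ y ∈ Y, A x y

/-- `d_A(X,Y)`: the density of the block `X × Y`. -/
noncomputable def dens {V W : Type*} (A : V → W → ℝ) (X : Finset V) (Y : Finset W) : ℝ :=
  wSum A X Y / ((X.card : ℝ) * (Y.card : ℝ))

/-- `‖A‖`: the sum of the absolute values of the entries of `A`. -/
def matNorm {V W : Type*} [Fintype V] [Fintype W] (A : V → W → ℝ) : ℝ :=
  ∑ x : V, ∑ y : W, |A x y|

open Classical in
/-- **Few dense blocks.**  Suppose `ε ∈ (0,1/2)`, `D ≥ 8/ε²`, and `A` is an `n × m` real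
matrix with `‖A‖ = mn`.  If `V₁,…,V_k` are pairwise disjoint sets of rows with
`|V_i| ≥ n/(2k)` and `W₁,…,W_l` are pairwise disjoint sets of columns with
`|W_j| ≥ m/(2l)`, then at most `εkl/2` of the pairs `(i,j)` satisfy
`|d_A(V_i,W_j)| ≥ εD`. -/
theorem few_dense_blocks {n m k l : ℕ} (ε D : ℝ) (hε0 : 0 < ε) (hε : ε < 1 / 2)
    (hD : 8 / ε ^ 2 ≤ D) (A : Fin n → Fin m → ℝ)
    (hA : matNorm A = (m : ℝ) * (n : ℝ))
    (Vc : Fin k → Finset (Fin n)) (Wc : Fin l → Finset (Fin m))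
    (hVdisj : ∀ i j : Fin k, i ≠ j → Disjoint (Vc i) (Vc j))
    (hWdisj : ∀ i j : Fin l, i ≠ j → Disjoint (Wc i) (Wc j))
    (hVsize : ∀ i, (n : ℝ) / (2 * k) ≤ ((Vc i).card : ℝ))
    (hWsize : ∀ j, (m : ℝ) / (2 * l) ≤ ((Wc j).card : ℝ)) :
    ((((Finset.univ : Finset (Fin k × Fin l)).filter fun ij =>
        ε * D ≤ |dens A (Vc ij.1) (Wc ij.2)|).card : ℝ)) ≤ ε * k * l / 2 := by
  have hD0 : (0:ℝ) < D := lt_of_lt_of_le (by positivity) hD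
  have hεD : 0 < ε * D := mul_pos hε0 hD0
  rcases Nat.eq_zero_or_pos k with hk | hk
  · subst hk
    simp
  rcases Nat.eq_zero_or_pos l with hl | hl
  · subst hl
    simp
  rcases Nat.eq_zero_or_pos n with hn | hn
  · subst hn
    have hV : ∀ i, Vc i = ∅ := fun i => Finset.eq_empty_of_forall_notMem (fun x _ => x.elim0)
    have : ∀ ij : Fin k × Fin l, ¬ (ε * D ≤ |dens A (Vc ij.1) (Wc ij.2)|) := by
      intro ij
      rw [hV, _root_.dens, wSum]
      simp
      exact hεD
    rw [Finset.filter_false_of_mem (fun ij _ => this ij)]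
    simp
    positivity
  rcases Nat.eq_zero_or_pos m with hm | hm
  · subst hm
    have hW : ∀ j, Wc j = ∅ := fun j => Finset.eq_empty_of_forall_notMem (fun x _ => x.elim0)
    have : ∀ ij : Fin k × Fin l, ¬ (ε * D ≤ |dens A (Vc ij.1) (Wc ij.2)|) := by
      intro ij
      rw [hW, _root_.dens, wSum]
      simp
      exact hεD
    rw [Finset.filter_false_of_mem (fun ij _ => this ij)]
    simp
    positivity
  have hnR : (0:ℝ) < n := by exact_mod_cast hn
  have hmR : (0:ℝ) < m := by exact_mod_cast hm
  have hkR : (0:ℝ) < k := by exact_mod_cast hk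
  have hlR : (0:ℝ) < l := by exact_mod_cast hl
  set S := (Finset.univ : Finset (Fin k × Fin l)).filter (fun ij =>
        ε * D ≤ |dens A (Vc ij.1) (Wc ij.2)|) with hS
  have hcardV : ∀ i, (0:ℝ) < (Vc i).card :=
    fun i => lt_of_lt_of_le (by positivity) (hVsize i)
  have hcardW : ∀ j, (0:ℝ) < (Wc j).card :=
    fun j => lt_of_lt_of_le (by positivity) (hWsize j)
  have key : ∀ ij ∈ S, ε * D * ((n:ℝ)/(2*k)) * ((m:ℝ)/(2*l)) ≤
      ∑ p ∈ (Vc ij.1) ×ˢ (Wc ij.2), |A p.1 p.2| := by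
    intro ij hij
    rw [hS, Finset.mem_filter] at hij
    obtain ⟨-, hd⟩ := hij
    have hcc : (0:ℝ) < ((Vc ij.1).card : ℝ) * ((Wc ij.2).card : ℝ) :=
      mul_pos (hcardV _) (hcardW _)
    have h1 : ε * D * (((Vc ij.1).card : ℝ) * ((Wc ij.2).card : ℝ)) ≤
        |wSum A (Vc ij.1) (Wc ij.2)| := by
      rw [_root_.dens, abs_div, abs_of_pos hcc, le_div_iff₀ hcc] at hd
      linarith
    have h2 : |wSum A (Vc ij.1) (Wc ij.2)| ≤
        ∑ p ∈ (Vc ij.1) ×ˢ (Wc ij.2), |A p.1 p.2| := by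
      rw [wSum, ← Finset.sum_product']
      exact Finset.abs_sum_le_sum_abs _ _
    refine le_trans ?_ (h1.trans h2)
    rw [← mul_assoc]
    gcongr
    · exact hVsize _
    · exact hWsize _
  have hdisj : (S : Set (Fin k × Fin l)).PairwiseDisjoint
      (fun ij => (Vc ij.1) ×ˢ (Wc ij.2)) := by
    intro ij _ ij' _ hne
    rw [Function.onFun, Finset.disjoint_left]
    rintro ⟨a, b⟩ hab hab'
    simp only [Finset.mem_product] at hab hab'
    by_cases h1 : ij.1 = ij'.1
    · have h2 : ij.2 ≠ ij'.2 := fun h2 => hne (Prod.ext h1 h2)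
      exact Finset.disjoint_left.mp (hWdisj _ _ h2) hab.2 hab'.2
    · exact Finset.disjoint_left.mp (hVdisj _ _ h1) hab.1 hab'.1
  have hsum : ∑ ij ∈ S, ∑ p ∈ (Vc ij.1) ×ˢ (Wc ij.2), |A p.1 p.2| ≤ (m:ℝ) * (n:ℝ) := by
    rw [← Finset.sum_biUnion hdisj]
    calc ∑ p ∈ S.biUnion (fun ij => (Vc ij.1) ×ˢ (Wc ij.2)), |A p.1 p.2|
        ≤ ∑ p : Fin n × Fin m, |A p.1 p.2| :=
          Finset.sum_le_sum_of_subset_of_nonneg (Finset.subset_univ _)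
            (fun _ _ _ => abs_nonneg _)
      _ = matNorm A := by rw [matNorm]; exact Fintype.sum_prod_type _
      _ = _ := hA
  have hmain : (S.card : ℝ) * (ε * D * ((n:ℝ)/(2*k)) * ((m:ℝ)/(2*l))) ≤ (m:ℝ) * (n:ℝ) := by
    have h := Finset.card_nsmul_le_sum S _ _ key
    rw [nsmul_eq_mul] at h
    exact h.trans hsum
  have hc : 0 < ε * D * ((n:ℝ)/(2*k)) * ((m:ℝ)/(2*l)) := by positivity
  rw [← mul_le_mul_iff_of_pos_right hc]
  refine hmain.trans ?_
  have hε2D : (8:ℝ) ≤ ε ^ 2 * D := by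
    rw [div_le_iff₀ (by positivity)] at hD
    linarith
  have heq : ε * (k:ℝ) * (l:ℝ) / 2 * (ε * D * ((n:ℝ)/(2*k)) * ((m:ℝ)/(2*l)))
      = ε ^ 2 * D * ((m:ℝ) * (n:ℝ)) / 8 := by
    field_simp
    ring
  rw [heq]
  nlinarith [mul_pos hmR hnR, mul_nonneg (sub_nonneg.mpr hε2D) (le_of_lt (mul_pos hmR hnR))]
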